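/- Under the assumptions e > -p/2 - n/2 - 1, -p/2 - 1 < a < n/2 + e, and b > -1, the shrinkage factor φ(w) defined by the ratio of Beta-type integrals satisfies lim_{w→∞} φ(w) = (p/2 + a + 1)/(n/2 + e - a). -/

import Mathlib

open Real Filter MeasureTheory

/-- The Gauss hypergeometric function `F(α, β; γ; z)`, defined by its power series. -/
noncomputable def hypF (α β γ z : ℝ) : ℝ :=
  ∑' i : ℕ, ((ascPochhammer ℝ i).eval α * (ascPochhammer ℝ i).eval β /
      (ascPochhammer ℝ i).eval γ) * z ^ i / (Nat.factorial i)

section auxStmt12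
open Set Topology

lemma auxMeas (c s : ℝ) : Measurable (fun u : ℝ => u ^ c * (1 + u) ^ (-s)) :=
  (measurable_id.pow_const c).mul ((measurable_const.add measurable_id).pow_const (-s))

lemma auxIntegrable {c s : ℝ} (hc : -1 < c) (hcs : c + 1 < s) :
    IntegrableOn (fun u : ℝ => u ^ c * (1 + u) ^ (-s)) (Set.Ioi (0:ℝ)) := by
  have hmeas := auxMeas c s
  have h1 : IntegrableOn (fun u : ℝ => u ^ c * (1 + u) ^ (-s)) (Set.Ioc (0:ℝ) 1) := by
    have hint : IntegrableOn (fun u : ℝ => u ^ c) (Set.Ioc (0:ℝ) 1) := by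
      have := intervalIntegral.intervalIntegrable_rpow' (a := 0) (b := 1) hc
      rwa [intervalIntegrable_iff_integrableOn_Ioc_of_le zero_le_one] at this
    refine hint.mono' hmeas.aestronglyMeasurable.restrict ?_
    filter_upwards [ae_restrict_mem measurableSet_Ioc] with u hu
    have hu0 : 0 < u := hu.1
    rw [Real.norm_eq_abs, abs_of_nonneg (by positivity)]
    have h2 : (1 + u) ^ (-s) ≤ 1 :=
      Real.rpow_le_one_of_one_le_of_nonpos (by linarith) (by linarith)
    calc u ^ c * (1 + u) ^ (-s) ≤ u ^ c * 1 := by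
          exact mul_le_mul_of_nonneg_left h2 (by positivity)
      _ = u ^ c := mul_one _
  have h2 : IntegrableOn (fun u : ℝ => u ^ c * (1 + u) ^ (-s)) (Set.Ioi (1:ℝ)) := by
    have hint : IntegrableOn (fun u : ℝ => u ^ (c - s)) (Set.Ioi (1:ℝ)) :=
      integrableOn_Ioi_rpow_of_lt (by linarith) one_pos
    refine hint.mono' hmeas.aestronglyMeasurable.restrict ?_
    filter_upwards [ae_restrict_mem measurableSet_Ioi] with u hu
    have hu0 : (0:ℝ) < u := lt_trans one_pos hu
    rw [Real.norm_eq_abs, abs_of_nonneg (by positivity)]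
    have h2 : (1 + u) ^ (-s) ≤ u ^ (-s) :=
      Real.rpow_le_rpow_of_nonpos hu0 (by linarith) (by linarith)
    calc u ^ c * (1 + u) ^ (-s) ≤ u ^ c * u ^ (-s) :=
          mul_le_mul_of_nonneg_left h2 (by positivity)
      _ = u ^ (c - s) := by rw [← Real.rpow_add hu0]; ring_nf
  have : Set.Ioi (0:ℝ) = Set.Ioc (0:ℝ) 1 ∪ Set.Ioi 1 := (Set.Ioc_union_Ioi_eq_Ioi zero_le_one).symm
  rw [this]
  exact h1.union h2

lemma auxJpos {c s : ℝ} (hc : -1 < c) (hcs : c + 1 < s) :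
    0 < ∫ u in Set.Ioi (0:ℝ), u ^ c * (1 + u) ^ (-s) := by
  have hae : 0 ≤ᶠ[ae (volume.restrict (Set.Ioi (0:ℝ)))] fun u : ℝ => u ^ c * (1 + u) ^ (-s) := by
    filter_upwards [ae_restrict_mem measurableSet_Ioi] with u hu
    have hu0 : (0:ℝ) < u := hu
    positivity
  rw [setIntegral_pos_iff_support_of_nonneg_ae hae (auxIntegrable hc hcs)]
  have hsub : Set.Ioi (0:ℝ) ⊆ Function.support (fun u : ℝ => u ^ c * (1 + u) ^ (-s)) ∩ Set.Ioi 0 := by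
      intro u hu
      have hu0 : (0:ℝ) < u := hu
      refine ⟨?_, hu⟩
      have : 0 < u ^ c * (1 + u) ^ (-s) := by positivity
      exact ne_of_gt this
  calc (0:ENNReal) < volume (Set.Ioi (0:ℝ)) := by simp
    _ ≤ _ := measure_mono hsub

lemma auxRec {c s : ℝ} (hc : -1 < c) (hcs : c + 2 < s) :
    (s - c - 2) * ∫ u in Set.Ioi (0:ℝ), u ^ (c+1) * (1 + u) ^ (-s)
      = (c + 1) * ∫ u in Set.Ioi (0:ℝ), u ^ c * (1 + u) ^ (-s) := by
  set f : ℝ → ℝ := fun u => u ^ (c+1) * (1 + u) ^ (-(s-1)) with hf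
  set f' : ℝ → ℝ := fun u => (c+1) * (u ^ c * (1 + u) ^ (-s))
      + (c+2-s) * (u ^ (c+1) * (1 + u) ^ (-s)) with hf'
  have hi0 : IntegrableOn (fun u : ℝ => u ^ c * (1 + u) ^ (-s)) (Set.Ioi (0:ℝ)) :=
    auxIntegrable hc (by linarith)
  have hi1 : IntegrableOn (fun u : ℝ => u ^ (c+1) * (1 + u) ^ (-s)) (Set.Ioi (0:ℝ)) :=
    auxIntegrable (by linarith) (by linarith)
  have hderiv : ∀ x ∈ Set.Ioi (0:ℝ), HasDerivAt f (f' x) x := by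
    intro x hx
    have hx0 : (0:ℝ) < x := hx
    have h1 : HasDerivAt (fun u : ℝ => u ^ (c+1)) ((c+1) * x ^ c) x := by
      have := Real.hasDerivAt_rpow_const (x := x) (p := c+1) (Or.inl (ne_of_gt hx0))
      simpa using this
    have h2 : HasDerivAt (fun u : ℝ => (1 + u) ^ (-(s-1)))
        (1 * (-(s-1)) * (1 + x) ^ (-(s-1) - 1)) x := by
      exact (HasDerivAt.rpow_const ((hasDerivAt_id x).const_add 1)
        (Or.inl (by positivity)))
    have h3 := h1.mul h2
    refine h3.congr_deriv (Eq.symm ?_)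
    have hxx : (0:ℝ) < 1 + x := by linarith
    have e1 : (1 + x) ^ (-(s-1) - 1) = (1 + x) ^ (-s) := by congr 1; ring
    have e2 : (1 + x) ^ (-(s-1)) = (1 + x) ^ (-s) * (1 + x) := by
      rw [← Real.rpow_add_one (ne_of_gt hxx)]; congr 1; ring
    have e3 : x ^ (c+1) = x ^ c * x := Real.rpow_add_one (ne_of_gt hx0) c
    show ((c+1) * (x ^ c * (1 + x) ^ (-s)) + (c+2-s) * (x ^ (c+1) * (1 + x) ^ (-s))) = _
    rw [e1, e2, e3]
    generalize x ^ c = A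
    generalize (1+x) ^ (-s) = B
    ring
  have hcont : ContinuousWithinAt f (Set.Ici 0) 0 := by
    apply ContinuousWithinAt.mul
    · exact (Real.continuousAt_rpow_const 0 (c+1) (Or.inr (by linarith))).continuousWithinAt
    · exact (ContinuousAt.rpow_const (by fun_prop) (Or.inl (by norm_num))).continuousWithinAt
  have hf'int : IntegrableOn f' (Set.Ioi (0:ℝ)) :=
    (hi0.const_mul _).add (hi1.const_mul _)
  have hlim : Tendsto f atTop (𝓝 0) := by
    apply squeeze_zero' (f := f) (g := fun x : ℝ => x ^ (c + 2 - s))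
    · filter_upwards [eventually_gt_atTop (0:ℝ)] with x hx
      positivity
    · filter_upwards [eventually_ge_atTop (1:ℝ)] with x hx
      have hx0 : (0:ℝ) < x := by linarith
      have h2 : (1 + x) ^ (-(s-1)) ≤ x ^ (-(s-1)) :=
        Real.rpow_le_rpow_of_nonpos hx0 (by linarith) (by linarith)
      calc x ^ (c+1) * (1 + x) ^ (-(s-1)) ≤ x ^ (c+1) * x ^ (-(s-1)) :=
            mul_le_mul_of_nonneg_left h2 (by positivity)
        _ = x ^ (c + 2 - s) := by rw [← Real.rpow_add hx0]; ring_nf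
    · have := tendsto_rpow_neg_atTop (y := s - c - 2) (by linarith)
      convert this using 2 with x
      ring_nf
  have key := integral_Ioi_of_hasDerivAt_of_tendsto hcont hderiv hf'int hlim
  have hf0 : f 0 = 0 := by
    simp only [hf]
    rw [Real.zero_rpow (by linarith : c + 1 ≠ 0)]
    ring
  rw [hf0, sub_zero] at key
  have hsplit : ∫ u in Set.Ioi (0:ℝ), f' u
      = (c+1) * (∫ u in Set.Ioi (0:ℝ), u ^ c * (1 + u) ^ (-s))
        + (c+2-s) * (∫ u in Set.Ioi (0:ℝ), u ^ (c+1) * (1 + u) ^ (-s)) := by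
    rw [hf']
    rw [integral_add (hi0.const_mul _) (hi1.const_mul _), integral_const_mul, integral_const_mul]
  rw [hsplit] at key
  linarith

lemma rpow_le_max {x lo : ℝ} (hlo : 0 < lo) (h1 : lo ≤ x) (h2 : x ≤ 1) (c : ℝ) :
    x ^ c ≤ max 1 (lo ^ c) := by
  rcases le_or_gt 0 c with hc | hc
  · exact le_max_of_le_left (Real.rpow_le_one (by linarith) h2 hc)
  · exact le_max_of_le_right (Real.rpow_le_rpow_of_nonpos hlo h1 (le_of_lt hc))

lemma auxIIB {b : ℝ} (hb : -1 < b) :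
    IntervalIntegrable (fun l : ℝ => (1 - l) ^ b) volume (1/2) 1 := by
  have h := (intervalIntegral.intervalIntegrable_rpow' (a := 0) (b := 1/2) hb).comp_sub_left 1
  have e1 : (1:ℝ) - 1/2 = 1/2 := by norm_num
  have e2 : (1:ℝ) - 0 = 1 := by norm_num
  rw [e1, e2] at h
  exact h.symm

lemma auxCOV {b c s w : ℝ} (hw : 0 < w) (d : ℝ) (hd : 0 ≤ d) :
    w ^ (c+1) * ∫ l in (0:ℝ)..d, l ^ c * (1 - l) ^ b * (1 + w * l) ^ (-s)
      = ∫ u in (0:ℝ)..(d * w), u ^ c * (1 - u / w) ^ b * (1 + u) ^ (-s) := by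
  have hw' : w ≠ 0 := ne_of_gt hw
  have h1 : ∫ u in (0:ℝ)..(d * w), u ^ c * (1 - u / w) ^ b * (1 + u) ^ (-s)
      = ∫ u in (0:ℝ)..(d * w),
          (fun l : ℝ => (w * l) ^ c * (1 - l) ^ b * (1 + w * l) ^ (-s)) (u / w) := by
    apply intervalIntegral.integral_congr
    intro u _
    simp only
    rw [mul_div_cancel₀ _ hw']
  have h1' := intervalIntegral.integral_comp_div (a := 0) (b := d * w) (c := w)
      (fun l : ℝ => (w * l) ^ c * (1 - l) ^ b * (1 + w * l) ^ (-s)) hw'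
  rw [h1, h1']
  rw [zero_div, mul_div_assoc, div_self hw', mul_one, smul_eq_mul]
  have h2 : ∫ l in (0:ℝ)..d, (w * l) ^ c * (1 - l) ^ b * (1 + w * l) ^ (-s)
      = ∫ l in (0:ℝ)..d, w ^ c * (l ^ c * (1 - l) ^ b * (1 + w * l) ^ (-s)) := by
    apply intervalIntegral.integral_congr
    intro l hl
    rw [Set.uIcc_of_le hd] at hl
    show (w * l) ^ c * (1 - l) ^ b * (1 + w * l) ^ (-s) = _
    rw [Real.mul_rpow (le_of_lt hw) hl.1]
    ring
  rw [h2, intervalIntegral.integral_const_mul]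
  rw [Real.rpow_add_one hw']
  ring

lemma auxMeasL (b c s w : ℝ) :
    Measurable (fun l : ℝ => l ^ c * (1 - l) ^ b * (1 + w * l) ^ (-s)) :=
  ((measurable_id.pow_const c).mul
    ((measurable_const.sub measurable_id).pow_const b)).mul
    ((measurable_const.add (measurable_id.const_mul w)).pow_const (-s))

lemma integrand_nonneg {b c s w : ℝ} (l : ℝ) (hl : 0 ≤ l) (hl2 : l ≤ 1) (hw : 0 ≤ w) :
    0 ≤ l ^ c * (1 - l) ^ b * (1 + w * l) ^ (-s) := by
  have h1 : (0:ℝ) ≤ 1 - l := by linarith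
  have h2 : (0:ℝ) ≤ 1 + w * l := by nlinarith
  positivity

/-- integrability on `[0, 1/2]` -/
lemma auxII1 {b c s w : ℝ} (hb : -1 < b) (hc : -1 < c) (hs : 0 ≤ s) (hw : 0 ≤ w) :
    IntervalIntegrable (fun l : ℝ => l ^ c * (1 - l) ^ b * (1 + w * l) ^ (-s))
      volume 0 (1/2) := by
  have hg : IntervalIntegrable (fun l : ℝ => max 1 ((1/2:ℝ) ^ b) * l ^ c) volume 0 (1/2) :=
    (intervalIntegral.intervalIntegrable_rpow' hc).const_mul _
  refine hg.mono_fun' ((auxMeasL b c s w).aestronglyMeasurable) ?_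
  rw [Filter.EventuallyLE, ae_restrict_iff' measurableSet_uIoc]
  refine Filter.Eventually.of_forall fun l hl => ?_
  rw [Set.uIoc_of_le (by norm_num : (0:ℝ) ≤ 1/2)] at hl
  have hl0 : 0 < l := hl.1
  have hl2 : l ≤ 1/2 := hl.2
  have h1 : (1/2:ℝ) ≤ 1 - l := by linarith
  have h2 : 1 - l ≤ 1 := by linarith
  have hbnd : (1 - l) ^ b ≤ max 1 ((1/2:ℝ) ^ b) := rpow_le_max (by norm_num) h1 h2 b
  have h3 : (1 + w * l) ^ (-s) ≤ 1 :=
    Real.rpow_le_one_of_one_le_of_nonpos (by nlinarith) (by linarith)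
  rw [Real.norm_eq_abs, abs_of_nonneg (integrand_nonneg l (le_of_lt hl0) (by linarith) hw)]
  calc l ^ c * (1 - l) ^ b * (1 + w * l) ^ (-s)
      ≤ l ^ c * (1 - l) ^ b * 1 := by
        apply mul_le_mul_of_nonneg_left h3
        have : (0:ℝ) ≤ 1 - l := by linarith
        positivity
    _ = l ^ c * (1 - l) ^ b := mul_one _
    _ ≤ l ^ c * max 1 ((1/2:ℝ) ^ b) := mul_le_mul_of_nonneg_left hbnd (by positivity)
    _ = max 1 ((1/2:ℝ) ^ b) * l ^ c := mul_comm _ _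

/-- integrability on `[1/2, 1]` -/
lemma auxII2 {b c s w : ℝ} (hb : -1 < b) (hc : -1 < c) (hs : 0 ≤ s) (hw : 0 ≤ w) :
    IntervalIntegrable (fun l : ℝ => l ^ c * (1 - l) ^ b * (1 + w * l) ^ (-s))
      volume (1/2) 1 := by
  have hg : IntervalIntegrable (fun l : ℝ => max 1 ((1/2:ℝ) ^ c) * (1 - l) ^ b)
      volume (1/2) 1 := (auxIIB hb).const_mul _
  refine hg.mono_fun' ((auxMeasL b c s w).aestronglyMeasurable) ?_
  rw [Filter.EventuallyLE, ae_restrict_iff' measurableSet_uIoc]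
  refine Filter.Eventually.of_forall fun l hl => ?_
  rw [Set.uIoc_of_le (by norm_num : (1/2:ℝ) ≤ 1)] at hl
  have hl0 : (1/2:ℝ) < l := hl.1
  have hl2 : l ≤ 1 := hl.2
  have hbnd : l ^ c ≤ max 1 ((1/2:ℝ) ^ c) := rpow_le_max (by norm_num) (le_of_lt hl0) hl2 c
  have h3 : (1 + w * l) ^ (-s) ≤ 1 :=
    Real.rpow_le_one_of_one_le_of_nonpos (by nlinarith) (by linarith)
  have h1l : (0:ℝ) ≤ 1 - l := by linarith
  rw [Real.norm_eq_abs, abs_of_nonneg (integrand_nonneg l (by linarith) hl2 hw)]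
  calc l ^ c * (1 - l) ^ b * (1 + w * l) ^ (-s)
      ≤ l ^ c * (1 - l) ^ b * 1 := by
        apply mul_le_mul_of_nonneg_left h3
        positivity
    _ = l ^ c * (1 - l) ^ b := mul_one _
    _ ≤ max 1 ((1/2:ℝ) ^ c) * (1 - l) ^ b := by
        apply mul_le_mul_of_nonneg_right hbnd
        positivity

lemma auxPoly {c s : ℝ} (hs : 0 < s) (hcs : c + 1 < s) :
    Tendsto (fun w : ℝ => w ^ (c+1) * (1 + w * (1/2)) ^ (-s)) atTop (𝓝 0) := by
  apply squeeze_zero' (g := fun w : ℝ => 2 ^ s * w ^ (c + 1 - s))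
  · filter_upwards [eventually_gt_atTop (0:ℝ)] with w hw
    have : (0:ℝ) < 1 + w * (1/2) := by linarith
    positivity
  · filter_upwards [eventually_gt_atTop (0:ℝ)] with w hw
    have hw2 : (0:ℝ) < w * (1/2) := by linarith
    have h1 : (1 + w * (1/2)) ^ (-s) ≤ (w * (1/2)) ^ (-s) :=
      Real.rpow_le_rpow_of_nonpos hw2 (by linarith) (by linarith)
    have h2 : (w * (1/2)) ^ (-s) = w ^ (-s) * 2 ^ s := by
      rw [Real.mul_rpow (le_of_lt hw) (by norm_num)]
      congr 1
      rw [one_div, Real.inv_rpow (by norm_num), Real.rpow_neg (by norm_num), inv_inv]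
    calc w ^ (c+1) * (1 + w * (1/2)) ^ (-s) ≤ w ^ (c+1) * (w * (1/2)) ^ (-s) :=
          mul_le_mul_of_nonneg_left h1 (by positivity)
      _ = 2 ^ s * w ^ (c + 1 - s) := by
          rw [h2, ← mul_assoc, ← Real.rpow_add hw]; ring_nf
  · have h := (tendsto_rpow_neg_atTop (y := s - (c+1)) (by linarith)).const_mul ((2:ℝ) ^ s)
    rw [mul_zero] at h
    convert h using 3 with w
    ring_nf

lemma auxBzero {b c s : ℝ} (hb : -1 < b) (hc : -1 < c) (hcs : c + 1 < s) :
    Tendsto (fun w : ℝ => w ^ (c+1) *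
        ∫ l in (1/2:ℝ)..1, l ^ c * (1 - l) ^ b * (1 + w * l) ^ (-s)) atTop (𝓝 0) := by
  have hs : (0:ℝ) < s := by linarith
  have hs' := hs
  set M := max 1 ((1/2:ℝ) ^ c) with hM
  have hM0 : (0:ℝ) ≤ M := le_trans zero_le_one (le_max_left _ _)
  set K := ∫ l in (1/2:ℝ)..1, (1 - l) ^ b with hK
  have hK0 : 0 ≤ K := by
    apply intervalIntegral.integral_nonneg (by norm_num)
    intro u hu
    exact Real.rpow_nonneg (by linarith [hu.2]) b
  apply squeeze_zero' (g := fun w : ℝ => (M * K) * (w ^ (c+1) * (1 + w * (1/2)) ^ (-s)))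
  · filter_upwards [eventually_gt_atTop (0:ℝ)] with w hw
    apply mul_nonneg (by positivity)
    apply intervalIntegral.integral_nonneg (by norm_num)
    intro u hu
    exact integrand_nonneg u (by linarith [hu.1]) hu.2 (le_of_lt hw)
  · filter_upwards [eventually_gt_atTop (0:ℝ)] with w hw
    have hIw : (0:ℝ) < 1 + w * (1/2) := by linarith
    have hmono : (∫ l in (1/2:ℝ)..1, l ^ c * (1 - l) ^ b * (1 + w * l) ^ (-s))
        ≤ ∫ l in (1/2:ℝ)..1, (M * (1 + w * (1/2)) ^ (-s)) * (1 - l) ^ b := by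
      apply intervalIntegral.integral_mono_on (by norm_num)
        (auxII2 hb hc (le_of_lt hs) (le_of_lt hw))
        ((auxIIB hb).const_mul _)
      intro l hl
      have hl1 : (1/2:ℝ) ≤ l := hl.1
      have hl2 : l ≤ 1 := hl.2
      have h1l : (0:ℝ) ≤ 1 - l := by linarith
      have hbnd : l ^ c ≤ M := rpow_le_max (by norm_num) hl1 hl2 c
      have h3 : (1 + w * l) ^ (-s) ≤ (1 + w * (1/2)) ^ (-s) := by
        apply Real.rpow_le_rpow_of_nonpos hIw ?_ (by linarith)
        nlinarith
      calc l ^ c * (1 - l) ^ b * (1 + w * l) ^ (-s)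
          ≤ l ^ c * (1 - l) ^ b * (1 + w * (1/2)) ^ (-s) := by
            apply mul_le_mul_of_nonneg_left h3 (by positivity)
        _ ≤ M * (1 - l) ^ b * (1 + w * (1/2)) ^ (-s) := by
            apply mul_le_mul_of_nonneg_right
              (mul_le_mul_of_nonneg_right hbnd (by positivity)) (by positivity)
        _ = (M * (1 + w * (1/2)) ^ (-s)) * (1 - l) ^ b := by ring
    rw [intervalIntegral.integral_const_mul] at hmono
    calc w ^ (c+1) * ∫ l in (1/2:ℝ)..1, l ^ c * (1 - l) ^ b * (1 + w * l) ^ (-s)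
        ≤ w ^ (c+1) * (M * (1 + w * (1/2)) ^ (-s) * K) :=
          mul_le_mul_of_nonneg_left hmono (by positivity)
      _ = (M * K) * (w ^ (c+1) * (1 + w * (1/2)) ^ (-s)) := by ring
  · have h := (auxPoly hs hcs).const_mul (M * K)
    rwa [mul_zero] at h

lemma auxA {b c s : ℝ} (hb : -1 < b) (hc : -1 < c) (hcs : c + 1 < s) :
    Tendsto (fun w : ℝ => ∫ u in (0:ℝ)..(1/2 * w), u ^ c * (1 - u / w) ^ b * (1 + u) ^ (-s))
      atTop (𝓝 (∫ u in Set.Ioi (0:ℝ), u ^ c * (1 + u) ^ (-s))) := by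
  set μ := volume.restrict (Set.Ioi (0:ℝ)) with hμ
  set f : ℝ → ℝ → ℝ := fun w u => u ^ c * (1 - u / w) ^ b * (1 + u) ^ (-s) with hf
  set F : ℝ → ℝ → ℝ := fun w => Set.indicator (Set.Ioc 0 (1/2 * w)) (f w) with hF
  have hfmeas : ∀ w : ℝ, Measurable (f w) := fun w =>
    ((measurable_id.pow_const c).mul
      ((measurable_const.sub (measurable_id.div_const w)).pow_const b)).mul
      ((measurable_const.add measurable_id).pow_const (-s))
  set M := max 1 ((1/2:ℝ) ^ b) with hM
  have hM0 : (0:ℝ) ≤ M := le_trans zero_le_one (le_max_left _ _)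
  have hDCT : Tendsto (fun w : ℝ => ∫ u, F w u ∂μ) atTop
      (𝓝 (∫ u, u ^ c * (1 + u) ^ (-s) ∂μ)) := by
    apply tendsto_integral_filter_of_dominated_convergence
      (bound := fun u : ℝ => M * (u ^ c * (1 + u) ^ (-s)))
    · exact Filter.Eventually.of_forall fun w =>
        ((hfmeas w).indicator measurableSet_Ioc).aestronglyMeasurable
    · filter_upwards [eventually_gt_atTop (0:ℝ)] with w hw
      rw [hμ, ae_restrict_iff' measurableSet_Ioi]
      refine Filter.Eventually.of_forall fun u hu => ?_
      have hu0 : (0:ℝ) < u := hu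
      by_cases hmem : u ∈ Set.Ioc (0:ℝ) (1/2 * w)
      · rw [hF]
        simp only [Set.indicator_of_mem hmem]
        have huw : u / w ≤ 1/2 := by
          rw [div_le_iff₀ hw]; linarith [hmem.2]
        have huw0 : 0 ≤ u / w := by positivity
        have h1 : (1/2:ℝ) ≤ 1 - u / w := by linarith
        have h2 : 1 - u / w ≤ 1 := by linarith
        have hbnd : (1 - u / w) ^ b ≤ M := rpow_le_max (by norm_num) h1 h2 b
        have hnn : 0 ≤ f w u := by
          rw [hf]
          have : (0:ℝ) ≤ 1 - u / w := by linarith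
          positivity
        rw [Real.norm_eq_abs, abs_of_nonneg hnn]
        calc u ^ c * (1 - u / w) ^ b * (1 + u) ^ (-s)
            ≤ u ^ c * M * (1 + u) ^ (-s) := by
              apply mul_le_mul_of_nonneg_right
                (mul_le_mul_of_nonneg_left hbnd (by positivity)) (by positivity)
          _ = M * (u ^ c * (1 + u) ^ (-s)) := by ring
      · rw [hF]
        simp only [Set.indicator_of_notMem hmem]
        simp only [norm_zero]
        positivity
    · exact (auxIntegrable hc hcs).const_mul M
    · rw [hμ, ae_restrict_iff' measurableSet_Ioi]
      refine Filter.Eventually.of_forall fun u hu => ?_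
      have hu0 : (0:ℝ) < u := hu
      have hev : ∀ᶠ w in atTop, F w u = f w u := by
        filter_upwards [eventually_ge_atTop (2 * u)] with w hw
        have : u ∈ Set.Ioc (0:ℝ) (1/2 * w) := ⟨hu0, by linarith⟩
        rw [hF]; simp only [Set.indicator_of_mem this]
      have hlim : Tendsto (fun w : ℝ => f w u) atTop (𝓝 (u ^ c * (1 + u) ^ (-s))) := by
        have hdiv : Tendsto (fun w : ℝ => u / w) atTop (𝓝 0) :=
          Tendsto.div_atTop tendsto_const_nhds tendsto_id
        have h1 : Tendsto (fun w : ℝ => 1 - u / w) atTop (𝓝 1) := by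
          have := tendsto_const_nhds (x := (1:ℝ)) (f := atTop (α := ℝ)) |>.sub hdiv
          rwa [sub_zero] at this
        have h2 : Tendsto (fun w : ℝ => (1 - u / w) ^ b) atTop (𝓝 1) := by
          have := h1.rpow_const (p := b) (Or.inl one_ne_zero)
          rwa [Real.one_rpow] at this
        have h3 := (tendsto_const_nhds (x := u ^ c) (f := atTop (α := ℝ))).mul h2
        have h4 := h3.mul (tendsto_const_nhds (x := (1 + u) ^ (-s)) (f := atTop (α := ℝ)))
        rw [mul_one] at h4
        exact h4
      exact hlim.congr' (hev.mono fun w h => h.symm)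
  have heq : ∀ᶠ w in atTop, (∫ u, F w u ∂μ)
      = ∫ u in (0:ℝ)..(1/2 * w), u ^ c * (1 - u / w) ^ b * (1 + u) ^ (-s) := by
    filter_upwards [eventually_gt_atTop (0:ℝ)] with w hw
    rw [intervalIntegral.integral_of_le (by linarith : (0:ℝ) ≤ 1/2 * w)]
    rw [hF, hμ, integral_indicator measurableSet_Ioc, Measure.restrict_restrict measurableSet_Ioc,
      Set.inter_eq_left.mpr Set.Ioc_subset_Ioi_self]
  exact (hDCT.congr' heq)

lemma auxMain {b c s : ℝ} (hb : -1 < b) (hc : -1 < c) (hcs : c + 1 < s) :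
    Tendsto (fun w : ℝ => w ^ (c+1) *
        ∫ l in (0:ℝ)..1, l ^ c * (1 - l) ^ b * (1 + w * l) ^ (-s))
      atTop (𝓝 (∫ u in Set.Ioi (0:ℝ), u ^ c * (1 + u) ^ (-s))) := by
  have hs : (0:ℝ) < s := by linarith
  have hsum := (auxA hb hc hcs).add (auxBzero hb hc hcs)
  rw [add_zero] at hsum
  apply hsum.congr'
  filter_upwards [eventually_gt_atTop (0:ℝ)] with w hw
  rw [← auxCOV hw (1/2) (by norm_num)]
  rw [← mul_add]
  rw [intervalIntegral.integral_add_adjacent_intervals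
    (auxII1 hb hc (le_of_lt hs) (le_of_lt hw)) (auxII2 hb hc (le_of_lt hs) (le_of_lt hw))]

theorem stmt_12 (p n : ℕ) (hp : 3 ≤ p) (hn : 1 ≤ n) (a b e : ℝ)
    (he : -(p:ℝ)/2 - (n:ℝ)/2 - 1 < e) (ha1 : -(p:ℝ)/2 - 1 < a) (ha2 : a < (n:ℝ)/2 + e)
    (hb : -1 < b) (φ : ℝ → ℝ)
    (hφ : ∀ w > (0:ℝ), φ w =
      w * (∫ l in (0:ℝ)..1, l ^ ((p:ℝ)/2 + a + 1) * (1 - l) ^ b *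
            (1 + w * l) ^ (-((p:ℝ)/2 + (n:ℝ)/2 + e + 2))) /
          (∫ l in (0:ℝ)..1, l ^ ((p:ℝ)/2 + a) * (1 - l) ^ b *
            (1 + w * l) ^ (-((p:ℝ)/2 + (n:ℝ)/2 + e + 2)))) :
    Tendsto φ atTop (nhds (((p:ℝ)/2 + a + 1) / ((n:ℝ)/2 + e - a))) := by
  have hp0 : (0:ℝ) ≤ (p:ℝ) := Nat.cast_nonneg p
  have hn0 : (0:ℝ) ≤ (n:ℝ) := Nat.cast_nonneg n
  have hc : -1 < (p:ℝ)/2 + a := by linarith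
  have hc1 : -1 < (p:ℝ)/2 + a + 1 := by linarith
  have hcs0 : ((p:ℝ)/2 + a) + 1 < (p:ℝ)/2 + (n:ℝ)/2 + e + 2 := by linarith
  have hcs1 : ((p:ℝ)/2 + a + 1) + 1 < (p:ℝ)/2 + (n:ℝ)/2 + e + 2 := by linarith
  have hcs2 : ((p:ℝ)/2 + a) + 2 < (p:ℝ)/2 + (n:ℝ)/2 + e + 2 := by linarith
  have h0 := auxMain (s := (p:ℝ)/2 + (n:ℝ)/2 + e + 2) hb hc hcs0
  have h1 := auxMain (s := (p:ℝ)/2 + (n:ℝ)/2 + e + 2) hb hc1 hcs1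
  have hJ0 := auxJpos (s := (p:ℝ)/2 + (n:ℝ)/2 + e + 2) hc hcs0
  have hquot := h1.div h0 (ne_of_gt hJ0)
  have hval : (∫ u in Set.Ioi (0:ℝ), u ^ ((p:ℝ)/2 + a + 1) *
        (1 + u) ^ (-((p:ℝ)/2 + (n:ℝ)/2 + e + 2))) /
      (∫ u in Set.Ioi (0:ℝ), u ^ ((p:ℝ)/2 + a) *
        (1 + u) ^ (-((p:ℝ)/2 + (n:ℝ)/2 + e + 2)))
      = ((p:ℝ)/2 + a + 1) / ((n:ℝ)/2 + e - a) := by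
    have hrec := auxRec (s := (p:ℝ)/2 + (n:ℝ)/2 + e + 2) hc hcs2
    have hden : (0:ℝ) < (n:ℝ)/2 + e - a := by linarith
    rw [div_eq_div_iff (ne_of_gt hJ0) (ne_of_gt hden)]
    linear_combination hrec
  have heq : (fun w : ℝ => (w ^ (((p:ℝ)/2 + a + 1) + 1) *
        ∫ l in (0:ℝ)..1, l ^ ((p:ℝ)/2 + a + 1) * (1 - l) ^ b *
          (1 + w * l) ^ (-((p:ℝ)/2 + (n:ℝ)/2 + e + 2))) /
      (w ^ (((p:ℝ)/2 + a) + 1) *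
        ∫ l in (0:ℝ)..1, l ^ ((p:ℝ)/2 + a) * (1 - l) ^ b *
          (1 + w * l) ^ (-((p:ℝ)/2 + (n:ℝ)/2 + e + 2)))) =ᶠ[atTop] φ := by
    filter_upwards [eventually_gt_atTop (0:ℝ)] with w hw
    rw [hφ w hw]
    have hwpow : w ^ (((p:ℝ)/2 + a) + 1) ≠ 0 := ne_of_gt (Real.rpow_pos_of_pos hw _)
    rw [Real.rpow_add_one (ne_of_gt hw) ((p:ℝ)/2 + a + 1)]
    rw [mul_comm (w ^ ((p:ℝ)/2 + a + 1)) w, mul_assoc]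
    rw [mul_left_comm w (w ^ (((p:ℝ)/2 + a) + 1)), mul_div_mul_left _ _ hwpow]
  have hfinal := Tendsto.congr' heq hquot
  rwa [hval] at hfinal

end auxStmt12
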